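/- Let n ≥ 2 and let G be a simple graph with 2n vertices having a perfect matching M. Then f(G,M) = n−1 if and only if for every two distinct edges e and e' of M, the subgraph of G induced by the four endpoints of e and e' contains an M-alternating cycle (necessarily a 4-cycle whose edges appear alternately in M and E(G)∖M). -/

import Mathlib

open SimpleGraph

/-- `M` is a perfect matching of the simple graph `G`, viewed as a set of edges:
the edges of `M` are pairwise disjoint edges of `G` covering every vertex. -/
def IsPM {V : Type*} (G : SimpleGraph V) (M : Set (Sym2 V)) : Prop :=
  M ⊆ G.edgeSet ∧
  (∀ e ∈ M, ∀ f ∈ M, e ≠ f → ∀ v : V, v ∈ e → v ∉ f) ∧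
  (∀ v : V, ∃ e ∈ M, v ∈ e)

/-- `S` is a forcing set of the perfect matching `M` of `G`:
`S ⊆ M` and `M` is the unique perfect matching of `G` containing `S`. -/
def IsForcingSet {V : Type*} (G : SimpleGraph V) (M S : Set (Sym2 V)) : Prop :=
  S ⊆ M ∧ ∀ M', IsPM G M' → S ⊆ M' → M' = M

/-- The forcing number `f(G,M)`: smallest cardinality of a forcing set of `M`. -/
noncomputable def forcingNum {V : Type*} (G : SimpleGraph V) (M : Set (Sym2 V)) : ℕ :=
  sInf {k | ∃ S, IsForcingSet G M S ∧ S.ncard = k}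

/-- The minimum forcing number `f(G)`. -/
noncomputable def minForcing {V : Type*} (G : SimpleGraph V) : ℕ :=
  sInf {k | ∃ M, IsPM G M ∧ forcingNum G M = k}

/-- The maximum forcing number `F(G)`. -/
noncomputable def maxForcing {V : Type*} (G : SimpleGraph V) : ℕ :=
  sSup {k | ∃ M, IsPM G M ∧ forcingNum G M = k}

/-- Vertex connectivity `κ(G)`: least size of a set of vertices whose deletion
disconnects the graph or leaves at most one vertex. -/
noncomputable def vertexConn {V : Type*} (G : SimpleGraph V) : ℕ :=
  sInf {k | ∃ X : Set V, X.ncard = k ∧ (¬ (G.induce Xᶜ).Connected ∨ Xᶜ.ncard ≤ 1)}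

/-- Edge connectivity `λ(G)`: least size of a set of edges whose deletion
disconnects the graph. -/
noncomputable def edgeConn {V : Type*} (G : SimpleGraph V) : ℕ :=
  sInf {k | ∃ F : Set (Sym2 V), F ⊆ G.edgeSet ∧ F.ncard = k ∧ ¬ (G.deleteEdges F).Connected}

/-- `G` is `l`-extendable: `G` is connected, has at least `2l+2` vertices, has a
perfect matching, and every matching of size `l` extends to a perfect matching. -/
def IsExtendable {V : Type*} [Fintype V] (G : SimpleGraph V) (l : ℕ) : Prop :=
  G.Connected ∧ 2 * l + 2 ≤ Fintype.card V ∧ (∃ M, IsPM G M) ∧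
    ∀ N : Set (Sym2 V), N ⊆ G.edgeSet →
      (∀ e ∈ N, ∀ f ∈ N, e ≠ f → ∀ v : V, v ∈ e → v ∉ f) → N.ncard = l →
      ∃ M, IsPM G M ∧ N ⊆ M

/-- `G` is factor-critical: deleting any vertex leaves a graph with a perfect matching. -/
def IsFactorCritical {V : Type*} (G : SimpleGraph V) : Prop :=
  ∀ v : V, ∃ M, IsPM (G.induce {v}ᶜ) M

/-- `o(G)`: the number of connected components of odd order. -/
noncomputable def oddComponents {V : Type*} (G : SimpleGraph V) : ℕ :=
  {c : G.ConnectedComponent | Odd c.supp.ncard}.ncard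

/-- `G` belongs to `𝒦_{n,n}⁺`: it is obtained from `K_{n,n}` by adding edges inside one
partite set; equivalently there is an independent set `A` of size `n` all of whose
vertices are adjacent to all vertices outside `A`. -/
def InKnnPlus {V : Type*} (n : ℕ) (G : SimpleGraph V) : Prop :=
  ∃ A : Set V, A.ncard = n ∧ (∀ a ∈ A, ∀ b ∈ A, ¬ G.Adj a b) ∧
    ∀ a ∈ A, ∀ b ∉ A, G.Adj a b

/-- `M` is a perfect matching of the subgraph of `G` induced by the vertex set `T`. -/
def IsPMOn {V : Type*} (G : SimpleGraph V) (T : Set V) (M : Set (Sym2 V)) : Prop :=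
  M ⊆ G.edgeSet ∧ (∀ e ∈ M, ∀ w : V, w ∈ e → w ∈ T) ∧
  (∀ e ∈ M, ∀ f ∈ M, e ≠ f → ∀ v : V, v ∈ e → v ∉ f) ∧
  (∀ w ∈ T, ∃ e ∈ M, w ∈ e)

/-- The forcing number of the perfect matching `M` of the subgraph of `G`
induced by the vertex set `T`. -/
noncomputable def forcingNumOn {V : Type*} (G : SimpleGraph V) (T : Set V)
    (M : Set (Sym2 V)) : ℕ :=
  sInf {k | ∃ S, S ⊆ M ∧ (∀ M', IsPMOn G T M' → S ⊆ M' → M' = M) ∧ S.ncard = k}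

/-- `{i,j}` is one of the `k` special pairs `{2t, 2t+1}` (0-indexed), `t < k`. -/
def pairIdx (k : ℕ) {n : ℕ} (i j : Fin n) : Prop :=
  ∃ t, t < k ∧ ((i.val = 2 * t ∧ j.val = 2 * t + 1) ∨ (j.val = 2 * t ∧ i.val = 2 * t + 1))

/-- The graph `H_k` on vertices `u_0,…,u_{n-1}` (left copy) and `v_0,…,v_{n-1}`
(right copy): edges `u_i v_i` for all `i`; `u_{2t} u_{2t+1}` and `v_{2t} v_{2t+1}`
for `t < k`; and `u_i v_j`, `u_j v_i` for every pair `i ≠ j` that is not one of the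
`k` special pairs. -/
def Hgraph (n k : ℕ) : SimpleGraph (Fin n ⊕ Fin n) :=
  SimpleGraph.fromRel (fun x y =>
    match x, y with
    | Sum.inl i, Sum.inr j => i = j ∨ ¬ pairIdx k i j
    | Sum.inl i, Sum.inl j => pairIdx k i j
    | Sum.inr i, Sum.inr j => pairIdx k i j
    | Sum.inr _, Sum.inl _ => False)

/-- The perfect matching `M₀ = {u_i v_i : i}` of `H_k`. -/
def M0 (n : ℕ) : Set (Sym2 (Fin n ⊕ Fin n)) :=
  {e | ∃ i : Fin n, e = s(Sum.inl i, Sum.inr i)}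

section StmtZeroHelpers

variable {V : Type*} {G : SimpleGraph V} {M M' : Set (Sym2 V)}

private lemma sym2_rep (e : Sym2 V) : ∃ u v : V, e = s(u,v) := by
  induction e using Sym2.ind with
  | _ u v => exact ⟨u, v, rfl⟩

private lemma pm_disj (hM : IsPM G M) {e f : Sym2 V} (he : e ∈ M) (hf : f ∈ M)
    (hne : e ≠ f) {v : V} (hv : v ∈ e) : v ∉ f := hM.2.1 e he f hf hne v hv

private lemma pm_ne (hM : IsPM G M) {u v : V} (h : s(u,v) ∈ M) : u ≠ v :=
  G.ne_of_adj ((SimpleGraph.mem_edgeSet _).mp (hM.1 h))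

private lemma pm_eq_of_subset (hM : IsPM G M) (hM' : IsPM G M') (h : M ⊆ M') :
    M' = M := by
  refine Set.Subset.antisymm ?_ h
  intro f hf
  obtain ⟨a, b, rfl⟩ := sym2_rep f
  obtain ⟨e, heM, hae⟩ := hM.2.2 a
  by_contra hfe
  have hne : e ≠ s(a,b) := fun hh => hfe (hh ▸ heM)
  exact pm_disj hM' (h heM) hf hne hae (Sym2.mem_mk_left a b)

private lemma pm_partner (hM : IsPM G M) (a : V) : ∃ b, s(a,b) ∈ M := by
  obtain ⟨e, heM, hae⟩ := hM.2.2 a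
  obtain ⟨x, y, rfl⟩ := sym2_rep e
  rcases Sym2.mem_iff.mp hae with rfl | rfl
  · exact ⟨y, heM⟩
  · exact ⟨x, Sym2.eq_swap ▸ heM⟩

private lemma pm_ncard {V : Type*} [Fintype V] {G : SimpleGraph V} {M : Set (Sym2 V)}
    (hM : IsPM G M) (n : ℕ) (hcard : Fintype.card V = 2 * n) : M.ncard = n := by
  classical
  have hfin : M.Finite := Set.toFinite M
  set MF := hfin.toFinset with hMF
  have hmem : ∀ e, e ∈ MF ↔ e ∈ M := fun e => hfin.mem_toFinset
  have hcov : (Finset.univ : Finset V) =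
      MF.biUnion (fun e => Finset.univ.filter (· ∈ e)) := by
    ext w
    simp only [Finset.mem_biUnion, Finset.mem_filter, Finset.mem_univ, true_and,
      true_iff]
    obtain ⟨e, heM, hw⟩ := hM.2.2 w
    exact ⟨e, (hmem e).mpr heM, hw⟩
  have hdisj : ∀ e ∈ MF, ∀ f ∈ MF, e ≠ f →
      Disjoint (Finset.univ.filter (· ∈ e)) (Finset.univ.filter (· ∈ f)) := by
    intro e heMF f hfMF hne
    rw [Finset.disjoint_left]
    intro w hw hw'
    simp only [Finset.mem_filter] at hw hw'
    exact pm_disj hM ((hmem e).mp heMF) ((hmem f).mp hfMF) hne hw.2 hw'.2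
  have h2 : ∀ e ∈ MF, (Finset.univ.filter (· ∈ e)).card = 2 := by
    intro e heMF
    have heM := (hmem e).mp heMF
    obtain ⟨x, y, rfl⟩ := sym2_rep e
    have hxy : x ≠ y := pm_ne hM heM
    have hfe : Finset.univ.filter (· ∈ s(x,y)) = {x, y} := by
      ext w
      simp [Sym2.mem_iff]
    rw [hfe, Finset.card_insert_of_notMem (by simpa using hxy),
      Finset.card_singleton]
  have hc : Fintype.card V = 2 * MF.card := by
    rw [← Finset.card_univ, hcov, Finset.card_biUnion hdisj,
      Finset.sum_congr rfl h2, Finset.sum_const, smul_eq_mul, mul_comm]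
  have hMFn : MF.card = n := by omega
  rw [Set.ncard_eq_toFinset_card' M]
  simpa [hMF] using hMFn

private lemma forcing_erase (hM : IsPM G M) {u v : V} (he : s(u,v) ∈ M) :
    IsForcingSet G M (M \ {s(u,v)}) := by
  refine ⟨Set.diff_subset, ?_⟩
  intro M' hM' hsub
  apply pm_eq_of_subset hM hM'
  intro f hf
  by_cases hfe : f = s(u,v)
  · subst hfe
    obtain ⟨w, hw⟩ := pm_partner hM' u
    have hwu : u ≠ w := pm_ne hM' hw
    obtain ⟨g, hgM, hwg⟩ := hM.2.2 w
    by_cases hge : g = s(u,v)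
    · subst hge
      rcases Sym2.mem_iff.mp hwg with rfl | rfl
      · exact absurd rfl hwu
      · exact hw
    · exfalso
      have hgM' : g ∈ M' := hsub ⟨hgM, by simpa using hge⟩
      by_cases hgw : s(u,w) = g
      · have huG : u ∈ g := hgw ▸ Sym2.mem_mk_left u w
        exact pm_disj hM he hgM (fun hh => hge hh.symm) (Sym2.mem_mk_left u v) huG
      · exact pm_disj hM' hw hgM' hgw (Sym2.mem_mk_right u w) hwg
  · exact hsub ⟨hf, by simpa using hfe⟩

private lemma forcing_of_no_alt (hM : IsPM G M) {u v x y : V}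
    (he : s(u,v) ∈ M) (he' : s(x,y) ∈ M) (hne : s(u,v) ≠ s(x,y))
    (hno : ¬((G.Adj u x ∧ G.Adj v y) ∨ (G.Adj u y ∧ G.Adj v x))) :
    IsForcingSet G M (M \ {s(u,v), s(x,y)}) := by
  have huv : u ≠ v := pm_ne hM he
  have hxy : x ≠ y := pm_ne hM he'
  have hu' : u ∉ s(x,y) := pm_disj hM he he' hne (Sym2.mem_mk_left u v)
  have hv' : v ∉ s(x,y) := pm_disj hM he he' hne (Sym2.mem_mk_right u v)
  have hux : u ≠ x := fun h => hu' (h ▸ Sym2.mem_mk_left x y)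
  have huy : u ≠ y := fun h => hu' (h ▸ Sym2.mem_mk_right x y)
  have hvx : v ≠ x := fun h => hv' (h ▸ Sym2.mem_mk_left x y)
  have hvy : v ≠ y := fun h => hv' (h ▸ Sym2.mem_mk_right x y)
  refine ⟨Set.diff_subset, ?_⟩
  intro M' hM' hsub
  -- Claim: if s(a,b) ∈ M' and a is one of the four vertices, so is b.
  have claimA : ∀ a b : V, s(a,b) ∈ M' →
      (a = u ∨ a = v ∨ a = x ∨ a = y) → (b = u ∨ b = v ∨ b = x ∨ b = y) := by
    intro a b hab ha
    obtain ⟨f, hfM, hbf⟩ := hM.2.2 b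
    by_cases hfe : f = s(u,v)
    · subst hfe
      rcases Sym2.mem_iff.mp hbf with rfl | rfl
      · exact Or.inl rfl
      · exact Or.inr (Or.inl rfl)
    by_cases hfe' : f = s(x,y)
    · subst hfe'
      rcases Sym2.mem_iff.mp hbf with rfl | rfl
      · exact Or.inr (Or.inr (Or.inl rfl))
      · exact Or.inr (Or.inr (Or.inr rfl))
    exfalso
    have hfM' : f ∈ M' := hsub ⟨hfM, by simp [hfe, hfe']⟩
    by_cases hgf : s(a,b) = f
    · have haf : a ∈ f := hgf ▸ Sym2.mem_mk_left a b
      rcases ha with rfl | rfl | rfl | rfl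
      · exact pm_disj hM he hfM (fun hh => hfe hh.symm) (Sym2.mem_mk_left a v) haf
      · exact pm_disj hM he hfM (fun hh => hfe hh.symm) (Sym2.mem_mk_right u a) haf
      · exact pm_disj hM he' hfM (fun hh => hfe' hh.symm) (Sym2.mem_mk_left a y) haf
      · exact pm_disj hM he' hfM (fun hh => hfe' hh.symm) (Sym2.mem_mk_right x a) haf
    · exact pm_disj hM' hab hfM' hgf (Sym2.mem_mk_right a b) hbf
  obtain ⟨w, hw⟩ := pm_partner hM' u
  have hwu : u ≠ w := pm_ne hM' hw
  have hw4 := claimA u w hw (Or.inl rfl)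
  -- helper to finish via M ⊆ M'
  have finish : s(u,v) ∈ M' → s(x,y) ∈ M' → M' = M := by
    intro h1 h2
    apply pm_eq_of_subset hM hM'
    intro f hf
    by_cases hfe : f = s(u,v)
    · exact hfe ▸ h1
    by_cases hfe' : f = s(x,y)
    · exact hfe' ▸ h2
    · exact hsub ⟨hf, by simp [hfe, hfe']⟩
  rcases hw4 with hwu' | hwv | hwx | hwy
  · exact absurd hwu'.symm hwu
  · -- u matched to v; now x must match to y
    rw [hwv] at hw
    obtain ⟨w', hw'⟩ := pm_partner hM' x
    have hw'x : x ≠ w' := pm_ne hM' hw'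
    have hw'4 := claimA x w' hw' (Or.inr (Or.inr (Or.inl rfl)))
    have hne2 : s(x,w') ≠ s(u,v) := by
      intro hh
      have hx : x ∈ s(u,v) := hh ▸ Sym2.mem_mk_left x w'
      rcases Sym2.mem_iff.mp hx with hh' | hh'
      · exact hux hh'.symm
      · exact hvx hh'.symm
    have hw'uv : w' ∉ s(u,v) := pm_disj hM' hw' hw hne2 (Sym2.mem_mk_right x w')
    have hw'u : w' ≠ u := fun hh => hw'uv (hh ▸ Sym2.mem_mk_left u v)
    have hw'v : w' ≠ v := fun hh => hw'uv (hh ▸ Sym2.mem_mk_right u v)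
    rcases hw'4 with h | h | h | h
    · exact absurd h hw'u
    · exact absurd h hw'v
    · exact absurd h.symm hw'x
    · exact finish hw (h ▸ hw')
  · -- u matched to x : alternating cycle branch 1
    exfalso
    rw [hwx] at hw
    have h1 : G.Adj u x := (SimpleGraph.mem_edgeSet _).mp (hM'.1 hw)
    obtain ⟨w', hw'⟩ := pm_partner hM' v
    have hw'v : v ≠ w' := pm_ne hM' hw'
    have hw'4 := claimA v w' hw' (Or.inr (Or.inl rfl))
    have hne2 : s(v,w') ≠ s(u,x) := by
      intro hh
      have hx : v ∈ s(u,x) := hh ▸ Sym2.mem_mk_left v w'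
      rcases Sym2.mem_iff.mp hx with hh' | hh'
      · exact huv hh'.symm
      · exact hvx hh'
    have hw'ux : w' ∉ s(u,x) := pm_disj hM' hw' hw hne2 (Sym2.mem_mk_right v w')
    have hw'u : w' ≠ u := fun hh => hw'ux (hh ▸ Sym2.mem_mk_left u x)
    have hw'x : w' ≠ x := fun hh => hw'ux (hh ▸ Sym2.mem_mk_right u x)
    rcases hw'4 with h | h | h | h
    · exact absurd h hw'u
    · exact absurd h.symm hw'v
    · exact absurd h hw'x
    · exact hno (Or.inl ⟨h1, (SimpleGraph.mem_edgeSet _).mp (hM'.1 (h ▸ hw'))⟩)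
  · -- u matched to y : alternating cycle branch 2
    exfalso
    rw [hwy] at hw
    have h1 : G.Adj u y := (SimpleGraph.mem_edgeSet _).mp (hM'.1 hw)
    obtain ⟨w', hw'⟩ := pm_partner hM' v
    have hw'v : v ≠ w' := pm_ne hM' hw'
    have hw'4 := claimA v w' hw' (Or.inr (Or.inl rfl))
    have hne2 : s(v,w') ≠ s(u,y) := by
      intro hh
      have hx : v ∈ s(u,y) := hh ▸ Sym2.mem_mk_left v w'
      rcases Sym2.mem_iff.mp hx with hh' | hh'
      · exact huv hh'.symm
      · exact hvy hh'
    have hw'uy : w' ∉ s(u,y) := pm_disj hM' hw' hw hne2 (Sym2.mem_mk_right v w')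
    have hw'u : w' ≠ u := fun hh => hw'uy (hh ▸ Sym2.mem_mk_left u y)
    have hw'y : w' ≠ y := fun hh => hw'uy (hh ▸ Sym2.mem_mk_right u y)
    rcases hw'4 with h | h | h | h
    · exact absurd h hw'u
    · exact absurd h.symm hw'v
    · exact hno (Or.inr ⟨h1, (SimpleGraph.mem_edgeSet _).mp (hM'.1 (h ▸ hw'))⟩)
    · exact absurd h hw'y

/-- If two free matching edges span an `M`-alternating 4-cycle, a set missing both
cannot be forcing. -/
private lemma alt_switch (hM : IsPM G M) {u v x y : V}
    (he : s(u,v) ∈ M) (he' : s(x,y) ∈ M) (hne : s(u,v) ≠ s(x,y))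
    (h1 : G.Adj u x) (h2 : G.Adj v y) {S : Set (Sym2 V)}
    (hS : IsForcingSet G M S) (heS : s(u,v) ∉ S) (he'S : s(x,y) ∉ S) : False := by
  have huv : u ≠ v := pm_ne hM he
  have hxy : x ≠ y := pm_ne hM he'
  have hu' : u ∉ s(x,y) := pm_disj hM he he' hne (Sym2.mem_mk_left u v)
  have hv' : v ∉ s(x,y) := pm_disj hM he he' hne (Sym2.mem_mk_right u v)
  have hux : u ≠ x := fun h => hu' (h ▸ Sym2.mem_mk_left x y)
  have huy : u ≠ y := fun h => hu' (h ▸ Sym2.mem_mk_right x y)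
  have hvx : v ≠ x := fun h => hv' (h ▸ Sym2.mem_mk_left x y)
  have hvy : v ≠ y := fun h => hv' (h ▸ Sym2.mem_mk_right x y)
  have huxM : s(u,x) ∉ M := by
    intro hmem
    have hneq : s(u,x) ≠ s(u,v) := by
      intro hh
      rcases (Sym2.eq_iff.mp hh) with ⟨-, rfl⟩ | ⟨rfl, rfl⟩
      · exact hvx rfl
      · exact hux rfl
    exact pm_disj hM hmem he hneq (Sym2.mem_mk_left u x) (Sym2.mem_mk_left u v)
  set M' : Set (Sym2 V) :=
    insert s(u,x) (insert s(v,y) (M \ {s(u,v), s(x,y)})) with hM'def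
  have memM' : ∀ f, f ∈ M' ↔ f = s(u,x) ∨ f = s(v,y) ∨
      (f ∈ M ∧ f ≠ s(u,v) ∧ f ≠ s(x,y)) := by
    intro f
    simp [hM'def, Set.mem_insert_iff, Set.mem_diff, and_assoc]
  have hPM' : IsPM G M' := by
    refine ⟨?_, ?_, ?_⟩
    · intro f hf
      rcases (memM' f).mp hf with rfl | rfl | ⟨hfM, -, -⟩
      · exact h1
      · exact h2
      · exact hM.1 hfM
    · intro a ha b hb hab t hta htb
      rcases (memM' a).mp ha with rfl | rfl | ⟨haM, hane, hane'⟩ <;>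
        rcases (memM' b).mp hb with hbe | hbe | ⟨hbM, hbne, hbne'⟩
      · exact hab hbe.symm
      · subst hbe
        rcases Sym2.mem_iff.mp hta with rfl | rfl <;>
          rcases Sym2.mem_iff.mp htb with hh | hh
        · exact huv hh
        · exact huy hh
        · exact hvx hh.symm
        · exact hxy hh
      · rcases Sym2.mem_iff.mp hta with rfl | rfl
        · exact pm_disj hM he hbM (fun hh => hbne hh.symm) (Sym2.mem_mk_left t v) htb
        · exact pm_disj hM he' hbM (fun hh => hbne' hh.symm) (Sym2.mem_mk_left t y) htb
      · subst hbe
        rcases Sym2.mem_iff.mp hta with rfl | rfl <;>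
          rcases Sym2.mem_iff.mp htb with hh | hh
        · exact huv hh.symm
        · exact hvx hh
        · exact huy hh.symm
        · exact hxy hh.symm
      · exact hab hbe.symm
      · rcases Sym2.mem_iff.mp hta with rfl | rfl
        · exact pm_disj hM he hbM (fun hh => hbne hh.symm) (Sym2.mem_mk_right u t) htb
        · exact pm_disj hM he' hbM (fun hh => hbne' hh.symm) (Sym2.mem_mk_right x t) htb
      · subst hbe
        rcases Sym2.mem_iff.mp htb with rfl | rfl
        · exact pm_disj hM he haM (fun hh => hane hh.symm) (Sym2.mem_mk_left t v) hta
        · exact pm_disj hM he' haM (fun hh => hane' hh.symm) (Sym2.mem_mk_left t y) hta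
      · subst hbe
        rcases Sym2.mem_iff.mp htb with rfl | rfl
        · exact pm_disj hM he haM (fun hh => hane hh.symm) (Sym2.mem_mk_right u t) hta
        · exact pm_disj hM he' haM (fun hh => hane' hh.symm) (Sym2.mem_mk_right x t) hta
      · exact pm_disj hM haM hbM hab hta htb
    · intro w
      obtain ⟨f, hfM, hwf⟩ := hM.2.2 w
      by_cases hfe : f = s(u,v)
      · subst hfe
        rcases Sym2.mem_iff.mp hwf with rfl | rfl
        · exact ⟨s(w,x), (memM' _).mpr (Or.inl rfl), Sym2.mem_mk_left w x⟩
        · exact ⟨s(w,y), (memM' _).mpr (Or.inr (Or.inl rfl)), Sym2.mem_mk_left w y⟩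
      by_cases hfe' : f = s(x,y)
      · subst hfe'
        rcases Sym2.mem_iff.mp hwf with rfl | rfl
        · exact ⟨s(u,w), (memM' _).mpr (Or.inl rfl), Sym2.mem_mk_right u w⟩
        · exact ⟨s(v,w), (memM' _).mpr (Or.inr (Or.inl rfl)), Sym2.mem_mk_right v w⟩
      · exact ⟨f, (memM' _).mpr (Or.inr (Or.inr ⟨hfM, hfe, hfe'⟩)), hwf⟩
  have hSM' : S ⊆ M' := by
    intro f hfS
    have hfM : f ∈ M := hS.1 hfS
    refine (memM' f).mpr (Or.inr (Or.inr ⟨hfM, ?_, ?_⟩))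
    · intro hh; exact heS (hh ▸ hfS)
    · intro hh; exact he'S (hh ▸ hfS)
  have hMM : M' = M := hS.2 M' hPM' hSM'
  exact huxM (hMM ▸ (memM' s(u,x)).mpr (Or.inl rfl))

end StmtZeroHelpers

/-- Lemma 2.2, part 1. -/
theorem stmt0 {V : Type*} [Fintype V] (n : ℕ) (hn : 2 ≤ n)
    (G : SimpleGraph V) (hcard : Fintype.card V = 2 * n)
    (M : Set (Sym2 V)) (hM : IsPM G M) :
    forcingNum G M = n - 1 ↔
      ∀ u v x y : V, s(u, v) ∈ M → s(x, y) ∈ M → s(u, v) ≠ s(x, y) →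
        ((G.Adj u x ∧ G.Adj v y) ∨ (G.Adj u y ∧ G.Adj v x)) := by
  
  classical
  have hfin : M.Finite := Set.toFinite M
  have hMn : M.ncard = n := pm_ncard hM n hcard
  constructor
  · -- forward direction
    intro hfn u v x y he he' hne
    by_contra hno
    have hforce := forcing_of_no_alt hM he he' hne hno
    have hpairsub : ({s(u,v), s(x,y)} : Set (Sym2 V)) ⊆ M := by
      intro f hf
      rcases hf with rfl | hf
      · exact he
      · exact (Set.mem_singleton_iff.mp hf) ▸ he'
    have hcardS : (M \ {s(u,v), s(x,y)}).ncard = n - 2 := by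
      rw [Set.ncard_diff hpairsub, Set.ncard_pair hne, hMn]
    have hmem : n - 2 ∈ {k | ∃ S, IsForcingSet G M S ∧ S.ncard = k} :=
      ⟨M \ {s(u,v), s(x,y)}, hforce, hcardS⟩
    have hle : forcingNum G M ≤ n - 2 := Nat.sInf_le hmem
    rw [hfn] at hle
    omega
  · -- backward direction
    intro halt
    have hVpos : 0 < Fintype.card V := by omega
    obtain ⟨v0⟩ := Fintype.card_pos_iff.mp hVpos
    obtain ⟨w0, hw0⟩ := pm_partner hM v0
    have hforce0 := forcing_erase hM hw0
    have hsingsub : ({s(v0,w0)} : Set (Sym2 V)) ⊆ M := by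
      intro f hf; exact (Set.mem_singleton_iff.mp hf) ▸ hw0
    have hcard0 : (M \ {s(v0,w0)}).ncard = n - 1 := by
      rw [Set.ncard_diff hsingsub, Set.ncard_singleton, hMn]
    have hmem : n - 1 ∈ {k | ∃ S, IsForcingSet G M S ∧ S.ncard = k} :=
      ⟨M \ {s(v0,w0)}, hforce0, hcard0⟩
    -- lower bound: every forcing set has at least n - 1 edges
    have hlow : ∀ k ∈ {k | ∃ S, IsForcingSet G M S ∧ S.ncard = k}, n - 1 ≤ k := by
      rintro k ⟨S, hS, rfl⟩
      by_contra hlt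
      push_neg at hlt
      have hSsub : S ⊆ M := hS.1
      have hdiff : 1 < (M \ S).ncard := by
        rw [Set.ncard_diff hSsub, hMn]
        omega
      obtain ⟨e, f, he, hf, hef⟩ :=
        (Set.one_lt_ncard_iff hfin.diff).mp hdiff
      obtain ⟨u, v, rfl⟩ := sym2_rep e
      obtain ⟨x, y, rfl⟩ := sym2_rep f
      rcases halt u v x y he.1 hf.1 hef with ⟨h1, h2⟩ | ⟨h1, h2⟩
      · exact alt_switch hM he.1 hf.1 hef h1 h2 hS he.2 hf.2
      · have hf' : s(y,x) ∈ M \ S := by rw [Sym2.eq_swap (a := y) (b := x)]; exact hf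
        have hef' : s(u,v) ≠ s(y,x) := by
          rw [Sym2.eq_swap (a := y) (b := x)]; exact hef
        exact alt_switch hM he.1 hf'.1 hef' h1 h2 hS he.2 hf'.2
    exact le_antisymm (Nat.sInf_le hmem)
      (hlow _ (Nat.sInf_mem (Set.nonempty_of_mem hmem)))
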